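/- arXiv:1709.00169 — 2 statements merged into one kernel-verified Lean document; each statement's English description precedes it below -/
import Mathlib

section
/- Let k be a field of characteristic zero and B an affine k-domain that is semi-rigid with LND(B) ≠ {0}. Then the following are equivalent: (I) ML(B) = ML*(B); (II) there exists a k-subalgebra C of B with C rigid and B = C^[1]; (III) ML(B) is rigid and B = ML(B)^[1]. -/
set_option maxHeartbeats 1000000
set_option synthInstance.maxHeartbeats 400000

/-- A derivation is *locally nilpotent* if every element is killed by some iterate. -/
def IsLND {k B : Type*} [CommRing k] [CommRing B] [Algebra k B]
    (D : Derivation k B B) : Prop :=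
  ∀ b : B, ∃ n : ℕ, (D.toLinearMap ^ n) b = 0

/-- A derivation *has a slice* if `1` is in its image. -/
def HasSlice {k B : Type*} [CommRing k] [CommRing B] [Algebra k B]
    (D : Derivation k B B) : Prop :=
  ∃ s : B, D s = 1

/-- The kernel of a derivation, as a subalgebra. -/
def lndKer {k B : Type*} [CommRing k] [CommRing B] [Algebra k B]
    (D : Derivation k B B) : Subalgebra k B where
  carrier := {b | D b = 0}
  mul_mem' := by
    intro a b ha hb
    simp only [Set.mem_setOf_eq] at *
    simp [D.leibniz, ha, hb]
  add_mem' := by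
    intro a b ha hb
    simp only [Set.mem_setOf_eq] at *
    simp [ha, hb]
  algebraMap_mem' := fun r => D.map_algebraMap r

/-- The Makar-Limanov invariant: intersection of the kernels of all locally
nilpotent derivations. -/
def ML (k : Type*) {B : Type*} [CommRing k] [CommRing B] [Algebra k B] : Subalgebra k B :=
  ⨅ D ∈ {D : Derivation k B B | IsLND D}, lndKer D

/-- The Makar-Limanov–Freudenburg invariant: intersection of the kernels of all locally
nilpotent derivations admitting a slice (equal to `⊤ = B` if none exist). -/
def MLstar (k : Type*) {B : Type*} [CommRing k] [CommRing B] [Algebra k B] : Subalgebra k B :=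
  ⨅ D ∈ {D : Derivation k B B | IsLND D ∧ HasSlice D}, lndKer D

/-- A `k`-algebra is *rigid* if it admits no nonzero locally nilpotent derivation. -/
def IsRigid (k B : Type*) [CommRing k] [CommRing B] [Algebra k B] : Prop :=
  ∀ D : Derivation k B B, IsLND D → D = 0

/-- The extension `A ⊆ B` has transcendence degree `n`. -/
def TrdegEq (A B : Type*) [CommRing A] [CommRing B] [Algebra A B] (n : ℕ) : Prop :=
  (∃ x : Fin n → B, AlgebraicIndependent A x) ∧
    ∀ x : Fin (n + 1) → B, ¬ AlgebraicIndependent A x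

/-- A subring `A` of a domain `B` is *inert* if `f * g ∈ A` for nonzero `f, g`
implies `f ∈ A` and `g ∈ A`. -/
def IsInert {B : Type*} [CommRing B] (A : Subring B) : Prop :=
  ∀ f g : B, f ≠ 0 → g ≠ 0 → f * g ∈ A → f ∈ A ∧ g ∈ A

open Polynomial

section Aux
variable {k A B : Type*} [CommRing k] [CommRing A] [Algebra k A] [CommRing B] [Algebra k B]

/-- Coefficientwise application of a derivation, as a derivation on polynomials. -/
noncomputable def coeffDer (δ : Derivation k A A) : Derivation k A[X] A[X] :=
  PolynomialModule.equivPolynomialSelf.compDer δ.mapCoeffs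

@[simp] lemma coeff_coeffDer (δ : Derivation k A A) (p : A[X]) (i : ℕ) :
    coeff (coeffDer δ p) i = δ (coeff p i) := rfl

lemma coeffDer_pow (δ : Derivation k A A) (n : ℕ) (p : A[X]) (i : ℕ) :
    coeff (((coeffDer δ).toLinearMap ^ n) p) i = (δ.toLinearMap ^ n) (coeff p i) := by
  induction n generalizing p with
  | zero => simp
  | succ n ih =>
    rw [pow_succ, Module.End.mul_apply, pow_succ, Module.End.mul_apply]
    rw [ih]
    congr 1

lemma coeffDer_X (δ : Derivation k A A) : coeffDer δ (X : A[X]) = 0 := by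
  ext i
  rw [coeff_coeffDer, coeff_zero]
  by_cases h : i = 1
  · subst h; rw [coeff_X_one, Derivation.map_one_eq_zero]
  · rw [coeff_X, if_neg (fun hh => h hh.symm), map_zero]

/-- Transport of a derivation along an algebra equivalence. -/
noncomputable def transport {B' : Type*} [CommRing B'] [Algebra k B'] (e : B ≃ₐ[k] B')
    (D : Derivation k B' B') : Derivation k B B where
  toLinearMap := e.symm.toLinearMap ∘ₗ D.toLinearMap ∘ₗ e.toLinearMap
  map_one_eq_zero' := by simp
  leibniz' a b := by
    simp only [LinearMap.comp_apply, AlgEquiv.toLinearMap_apply, map_mul, smul_eq_mul,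
      Derivation.coeFn_coe]
    rw [Derivation.leibniz, smul_eq_mul, smul_eq_mul, map_add, map_mul, map_mul,
      e.symm_apply_apply, e.symm_apply_apply]

@[simp] lemma transport_apply {B' : Type*} [CommRing B'] [Algebra k B'] (e : B ≃ₐ[k] B')
    (D : Derivation k B' B') (b : B) : transport e D b = e.symm (D (e b)) := rfl

lemma transport_pow {B' : Type*} [CommRing B'] [Algebra k B'] (e : B ≃ₐ[k] B')
    (D : Derivation k B' B') (n : ℕ) (b : B) :
    ((transport e D).toLinearMap ^ n) b = e.symm ((D.toLinearMap ^ n) (e b)) := by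
  induction n generalizing b with
  | zero => simp
  | succ n ih =>
    rw [pow_succ, Module.End.mul_apply, pow_succ, Module.End.mul_apply, ih]
    simp only [Derivation.coeFn_coe, transport_apply, e.apply_symm_apply]

lemma transport_isLND {B' : Type*} [CommRing B'] [Algebra k B'] (e : B ≃ₐ[k] B')
    {D : Derivation k B' B'} (hD : IsLND D) : IsLND (transport e D) := by
  intro b
  obtain ⟨n, hn⟩ := hD (e b)
  exact ⟨n, by rw [transport_pow, hn, map_zero]⟩

end Aux

section Slice
variable {k B : Type*} [Field k] [CharZero k] [CommRing B] [IsDomain B] [Algebra k B]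
variable (D : Derivation k B B) {s : B}

lemma mem_lndKer_iff {D : Derivation k B B} {b : B} : b ∈ lndKer D ↔ D b = 0 := Iff.rfl

lemma charZero_ker : CharZero ↥(lndKer D) :=
  charZero_of_injective_algebraMap (algebraMap k ↥(lndKer D)).injective

lemma nzsd_ker : NoZeroSMulDivisors ℕ ↥(lndKer D) := by
  haveI := charZero_ker D
  constructor
  intro n a h
  rw [nsmul_eq_mul] at h
  rcases mul_eq_zero.1 h with h | h
  · exact Or.inl (by exact_mod_cast h)
  · exact Or.inr h

lemma D_aeval (hs : D s = 1) (p : Polynomial ↥(lndKer D)) :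
    D (aeval s p) = aeval s (derivative p) := by
  have h0 : ((0 : Derivation k ↥(lndKer D) ↥(lndKer D))).mapCoeffs p = 0 :=
    by ext i; rw [Derivation.mapCoeffs_apply]; simp
  have := Derivation.apply_aeval_eq' (0 : Derivation k ↥(lndKer D) ↥(lndKer D)) D
    (Algebra.linearMap ↥(lndKer D) B) (fun a => by simpa using (Subtype.mem a : D ↑a = 0).symm)
    s p
  rw [h0, map_zero, map_zero, hs, smul_eq_mul, mul_one, zero_add] at this
  exact this

lemma aeval_inj (hs : D s = 1) :
    Function.Injective (aeval (R := ↥(lndKer D)) s) := by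
  haveI := nzsd_ker D
  have key : ∀ n (p : Polynomial ↥(lndKer D)), p.natDegree ≤ n → aeval s p = 0 → p = 0 := by
    intro n
    induction n with
    | zero =>
      intro p hd h
      rw [eq_C_of_natDegree_le_zero hd] at h ⊢
      rw [aeval_C] at h
      have : (p.coeff 0 : B) = 0 := h
      have h0 : p.coeff 0 = 0 := Subtype.ext this
      rw [h0, map_zero]
    | succ n ih =>
      intro p hd h
      have h1 : aeval (R := ↥(lndKer D)) s (derivative p) = 0 := by
        rw [← D_aeval D hs, h, map_zero]
      have h2 : derivative p = 0 := ih _ (le_trans (natDegree_derivative_le p) (by omega)) h1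
      have h3 : p.natDegree = 0 := by haveI := charZero_ker D; exact natDegree_eq_zero_of_derivative_eq_zero h2
      exact ih p (by omega) h
  exact (injective_iff_map_eq_zero _).2 fun p hp => key _ p le_rfl hp

lemma aeval_surj (hlnd : IsLND D) (hs : D s = 1) :
    Function.Surjective (aeval (R := ↥(lndKer D)) s) := by
  have key : ∀ n (b : B), (D.toLinearMap ^ n) b = 0 →
      ∃ p : Polynomial ↥(lndKer D), aeval s p = b := by
    intro n
    induction n with
    | zero =>
      intro b hb
      rw [pow_zero, Module.End.one_apply] at hb
      exact ⟨0, by rw [map_zero, hb]⟩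
    | succ n ih =>
      intro b hb
      rw [pow_succ, Module.End.mul_apply] at hb
      obtain ⟨q, hq⟩ := ih (D b) hb
      set Q : Polynomial ↥(lndKer D) :=
        q.sum fun i a => monomial (i + 1) ((((i : k) + 1)⁻¹) • a) with hQdef
      have hQ : derivative Q = q := by
        rw [hQdef, Polynomial.sum_def, map_sum]
        have : ∀ i ∈ q.support,
            derivative (monomial (i + 1) ((((i : k) + 1)⁻¹) • q.coeff i))
              = monomial i (q.coeff i) := by
          intro i _
          rw [derivative_monomial]
          congr 1
          rw [mul_comm, ← nsmul_eq_mul, ← Nat.cast_smul_eq_nsmul k, smul_smul,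
            Nat.cast_add, Nat.cast_one, mul_inv_cancel₀ (Nat.cast_add_one_ne_zero i),
            one_smul]
        rw [Finset.sum_congr rfl this, ← Polynomial.sum_def, Polynomial.sum_monomial_eq]
      have hker : b - aeval s Q ∈ lndKer D := by
        rw [mem_lndKer_iff, map_sub, D_aeval D hs, hQ, hq, sub_self]
      refine ⟨C ⟨b - aeval s Q, hker⟩ + Q, ?_⟩
      have hadd : aeval (R := ↥(lndKer D)) s (C ⟨b - aeval s Q, hker⟩ + Q)
          = aeval (R := ↥(lndKer D)) s (C ⟨b - aeval s Q, hker⟩) + aeval s Q := map_add _ _ _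
      rw [hadd, aeval_C]
      have hcoe : (algebraMap ↥(lndKer D) B) ⟨b - aeval s Q, hker⟩ = b - aeval s Q := rfl
      rw [hcoe]
      ring
  intro b
  obtain ⟨n, hn⟩ := hlnd b
  exact key n b hn

/-- The slice theorem: `B` is a polynomial ring over the kernel. -/
noncomputable def sliceEquiv (hlnd : IsLND D) (hs : D s = 1) :
    B ≃ₐ[↥(lndKer D)] Polynomial ↥(lndKer D) :=
  (AlgEquiv.ofBijective (aeval (R := ↥(lndKer D)) s) ⟨aeval_inj D hs, aeval_surj D hlnd hs⟩).symm

lemma sliceEquiv_s (hlnd : IsLND D) (hs : D s = 1) : sliceEquiv D hlnd hs s = X := by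
  rw [sliceEquiv, AlgEquiv.symm_apply_eq]; exact (aeval_X s).symm

/-- Rigidity of the kernel in the semi-rigid situation with a slice. -/
lemma rigid_ker (hlnd : IsLND D) (hs : D s = 1)
    (hker : ∀ D' : Derivation k B B, IsLND D' → D' ≠ 0 → lndKer D' = lndKer D) :
    IsRigid k ↥(lndKer D) := by
  intro δ hδ
  by_contra hne
  have ha : ∃ a, δ a ≠ 0 := by
    by_contra h
    push_neg at h
    exact hne (Derivation.ext h)
  obtain ⟨a, ha⟩ := ha
  let e' : B ≃ₐ[k] Polynomial ↥(lndKer D) :=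
    AlgEquiv.restrictScalars k (sliceEquiv D hlnd hs)
  have he's : e' s = X := sliceEquiv_s D hlnd hs
  let D' : Derivation k B B := transport e' (coeffDer δ)
  have hD'lnd : IsLND D' := by
    intro b
    set p := e' b with hp
    set g : ℕ → ℕ := fun i => (hδ (p.coeff i)).choose with hg
    set N := p.support.sup g with hN
    refine ⟨N, ?_⟩
    rw [transport_pow]
    have hz : ((coeffDer δ).toLinearMap ^ N) (e' b) = 0 := by
      ext i
      rw [coeffDer_pow, coeff_zero]
      by_cases hi : i ∈ p.support
      · have hgi : g i ≤ N := Finset.le_sup hi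
        have : (δ.toLinearMap ^ N) (p.coeff i)
            = (δ.toLinearMap ^ (N - g i)) ((δ.toLinearMap ^ (g i)) (p.coeff i)) := by
          rw [← Module.End.mul_apply, ← pow_add, Nat.sub_add_cancel hgi]
        rw [← hp, this, (hδ (p.coeff i)).choose_spec, map_zero]
      · rw [← hp, Polynomial.notMem_support_iff.1 hi, map_zero]
    rw [hz, map_zero]
  have hD'ne : D' ≠ 0 := by
    intro h
    apply ha
    have : D' (e'.symm (C a)) = 0 := by rw [h]; rfl
    rw [transport_apply, e'.apply_symm_apply] at this
    have h2 : coeffDer δ (C a) = 0 := by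
      have := congrArg e' this
      rwa [e'.apply_symm_apply, map_zero] at this
    have := congrArg (fun q => coeff q 0) h2
    simpa using this
  have hkk : lndKer D' = lndKer D := hker D' hD'lnd hD'ne
  have hsD' : D' s = 0 := by
    rw [transport_apply, he's, coeffDer_X, map_zero]
  have : s ∈ lndKer D := hkk ▸ (mem_lndKer_iff.2 hsD')
  rw [mem_lndKer_iff, hs] at this
  exact one_ne_zero this

/-- A polynomial algebra admits a locally nilpotent derivation with a slice. -/
lemma exists_slice_of_poly (C : Subalgebra k B) (e0 : B ≃ₐ[C] Polynomial C) :
    ∃ D : Derivation k B B, IsLND D ∧ HasSlice D := by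
  let e' : B ≃ₐ[k] Polynomial ↥C := AlgEquiv.restrictScalars k e0
  let DX : Derivation k (Polynomial ↥C) (Polynomial ↥C) :=
    (Polynomial.derivative' (R := ↥C)).restrictScalars k
  have hDX : ∀ p : Polynomial ↥C, DX p = derivative p := fun p => rfl
  have hDXpow : ∀ n (p : Polynomial ↥C), (DX.toLinearMap ^ n) p = derivative^[n] p := by
    intro n
    induction n with
    | zero => intro p; simp
    | succ n ih =>
      intro p
      rw [pow_succ, Module.End.mul_apply, Function.iterate_succ_apply, ← ih]
      congr 1
  refine ⟨transport e' DX, transport_isLND e' ?_, ?_⟩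
  · intro p
    refine ⟨p.natDegree + 1, ?_⟩
    rw [hDXpow]
    exact iterate_derivative_eq_zero (Nat.lt_succ_self _)
  · refine ⟨e'.symm X, ?_⟩
    rw [transport_apply, e'.apply_symm_apply, hDX, derivative_X, map_one]

end Slice

section Main
variable {k B : Type*} [Field k] [CharZero k] [CommRing B] [IsDomain B] [Algebra k B]

lemma ML_eq_ker {D0 : Derivation k B B} (h0 : IsLND D0) (hne : D0 ≠ 0)
    (hker : ∀ D : Derivation k B B, IsLND D → D ≠ 0 → lndKer D = lndKer D0) :
    ML k (B := B) = lndKer D0 := by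
  apply le_antisymm
  · exact biInf_le _ h0
  · refine le_iInf fun D => le_iInf fun hD => ?_
    by_cases hDne : D = 0
    · subst hDne
      intro b _
      exact mem_lndKer_iff.2 rfl
    · rw [hker D hD hDne]

lemma ML_eq_MLstar_iff {D0 : Derivation k B B} (h0 : IsLND D0) (hne : D0 ≠ 0)
    (hker : ∀ D : Derivation k B B, IsLND D → D ≠ 0 → lndKer D = lndKer D0) :
    (ML k (B := B) = MLstar k (B := B)) ↔ ∃ D : Derivation k B B, IsLND D ∧ HasSlice D := by
  have hML : ML k (B := B) = lndKer D0 := ML_eq_ker h0 hne hker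
  constructor
  · intro h
    by_contra hno
    have htop : MLstar k (B := B) = ⊤ := by
      apply le_antisymm le_top
      refine le_iInf fun D => le_iInf fun hD => absurd ⟨D, hD.1, hD.2⟩ hno
    rw [htop, hML] at h
    obtain ⟨b, hb⟩ : ∃ b, D0 b ≠ 0 := by
      by_contra hall
      push_neg at hall
      exact hne (Derivation.ext hall)
    exact hb ((Subalgebra.ext_iff.1 h b).2 trivial)
  · rintro ⟨D, hD, s, hs⟩
    have hDne : D ≠ 0 := by
      intro h
      subst h
      exact one_ne_zero (α := B) (by rw [← hs]; rfl)
    apply le_antisymm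
    · refine le_iInf fun D' => le_iInf fun hD' => ?_
      exact biInf_le _ hD'.1
    · calc MLstar k (B := B) ≤ lndKer D := biInf_le _ ⟨hD, s, hs⟩
        _ = lndKer D0 := hker D hD hDne
        _ = ML k (B := B) := hML.symm

end Main

/-- For a semi-rigid affine domain `B` with `LND(B) ≠ {0}`, the following are equivalent:
(I) `ML(B) = ML*(B)`; (II) `B = C^[1]` for some rigid subalgebra `C`;
(III) `ML(B)` is rigid and `B = ML(B)^[1]`. -/
theorem stmt_12 {k B : Type*} [Field k] [CharZero k] [CommRing B] [IsDomain B] [Algebra k B]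
    [Algebra.FiniteType k B]
    (hsr : ∃ D0 : Derivation k B B, IsLND D0 ∧ D0 ≠ 0 ∧
      ∀ D : Derivation k B B, IsLND D → D ≠ 0 → lndKer D = lndKer D0) :
    (ML k (B := B) = MLstar k (B := B) ↔
      ∃ C : Subalgebra k B, IsRigid k C ∧ Nonempty (B ≃ₐ[C] Polynomial C)) ∧
    (ML k (B := B) = MLstar k (B := B) ↔
      (IsRigid k (ML k (B := B)) ∧
        Nonempty (B ≃ₐ[ML k (B := B)] Polynomial (ML k (B := B))))) := by
  obtain ⟨D0, h0, hne0, hker0⟩ := hsr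
  have hML : ML k (B := B) = lndKer D0 := ML_eq_ker h0 hne0 hker0
  have hiff := ML_eq_MLstar_iff h0 hne0 hker0
  -- (I) implies (III)
  have hItoIII : (ML k (B := B) = MLstar k (B := B)) →
      IsRigid k (ML k (B := B)) ∧
        Nonempty (B ≃ₐ[ML k (B := B)] Polynomial (ML k (B := B))) := by
    intro hI
    obtain ⟨D, hD, s, hs⟩ := hiff.1 hI
    have hDne : D ≠ 0 := by
      intro h
      subst h
      exact one_ne_zero (α := B) (by rw [← hs]; rfl)
    have hMLD : ML k (B := B) = lndKer D := hML.trans (hker0 D hD hDne).symm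
    rw [hMLD]
    have hker' : ∀ D' : Derivation k B B, IsLND D' → D' ≠ 0 → lndKer D' = lndKer D :=
      fun D' hD' hD'ne => (hker0 D' hD' hD'ne).trans (hker0 D hD hDne).symm
    exact ⟨rigid_ker D hD hs hker', ⟨sliceEquiv D hD hs⟩⟩
  constructor
  · constructor
    · intro hI
      obtain ⟨hrig, he⟩ := hItoIII hI
      exact ⟨ML k (B := B), hrig, he⟩
    · rintro ⟨C, _, ⟨e0⟩⟩
      exact hiff.2 (exists_slice_of_poly C e0)
  · constructor
    · exact hItoIII
    · rintro ⟨_, ⟨e0⟩⟩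
      exact hiff.2 (exists_slice_of_poly _ e0)
end

section
/- Let k be a field of characteristic zero and B a two-dimensional affine k-domain with ML*(B) ≠ B. Then ML(B) = ML*(B). -/
open Finset

section Aux
variable {k B : Type*} [Field k] [CharZero k] [CommRing B] [Algebra k B]

local notation "dp" D:max n:max => (Derivation.toLinearMap D ^ n : B →ₗ[k] B)

omit [CharZero k] in
lemma dp_succ (D : Derivation k B B) (n : ℕ) (x : B) :
    (dp D (n+1)) x = (dp D n) (D x) := by
  rw [pow_succ, Module.End.mul_apply]; rfl

omit [CharZero k] in
lemma dp_succ' (D : Derivation k B B) (n : ℕ) (x : B) :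
    (dp D (n+1)) x = D ((dp D n) x) := by
  rw [pow_succ', Module.End.mul_apply]; rfl

omit [CharZero k] in
/-- iterated Leibniz rule -/
lemma iter_leibniz (D : Derivation k B B) (n : ℕ) (x y : B) :
    (dp D n) (x * y)
      = ∑ i ∈ range (n+1), n.choose i • ((dp D i) x * (dp D (n-i)) y) := by
  induction n with
  | zero => simp
  | succ n ih =>
    rw [dp_succ' D n, ih, map_sum]
    have hterm : ∀ i ∈ range (n+1),
        D (n.choose i • ((dp D i) x * (dp D (n-i)) y))
        = n.choose i • ((dp D (i+1)) x * (dp D (n-i)) y)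
          + n.choose i • ((dp D i) x * (dp D (n-i+1)) y) := by
      intro i _
      rw [map_nsmul, Derivation.leibniz, dp_succ', dp_succ']
      simp only [smul_eq_mul, nsmul_eq_mul, smul_add]
      ring
    rw [Finset.sum_congr rfl hterm, Finset.sum_add_distrib]
    -- now Pascal
    have h2 : ∀ i ∈ range (n+1),
        n.choose i • ((dp D i) x * (dp D (n-i+1)) y)
        = n.choose i • ((dp D i) x * (dp D (n+1-i)) y) := by
      intro i hi
      rw [mem_range] at hi
      have h : n - i + 1 = n + 1 - i := by omega
      rw [h]
    rw [Finset.sum_congr rfl h2]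
    rw [Finset.sum_range_succ' (fun i => (n+1).choose i • ((dp D i) x * (dp D (n+1-i)) y)) (n+1)]
    have h3 : ∀ i ∈ range (n+1),
        (n+1).choose (i+1) • ((dp D (i+1)) x * (dp D (n+1-(i+1))) y)
        = n.choose i • ((dp D (i+1)) x * (dp D (n-i)) y)
          + n.choose (i+1) • ((dp D (i+1)) x * (dp D (n-i)) y) := by
      intro i hi
      rw [mem_range] at hi
      rw [Nat.choose_succ_succ, add_nsmul]
      have h : n + 1 - (i + 1) = n - i := by omega
      rw [h]
    rw [Finset.sum_congr rfl h3, Finset.sum_add_distrib]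
    have h4 : ∑ i ∈ range (n+1), n.choose (i+1) • ((dp D (i+1)) x * (dp D (n-i)) y)
        = ∑ i ∈ range (n+1), n.choose i • ((dp D i) x * (dp D (n+1-i)) y)
          - (n.choose 0) • ((dp D 0) x * (dp D (n+1)) y) := by
      rw [Finset.sum_range_succ' (fun i => n.choose i • ((dp D i) x * (dp D (n+1-i)) y)) n]
      rw [Finset.sum_range_succ (fun i => n.choose (i+1) • ((dp D (i+1)) x * (dp D (n-i)) y)) n]
      simp only [Nat.choose_succ_self, zero_smul, add_zero, Nat.sub_self]
      have : ∀ i ∈ range n, n.choose (i+1) • ((dp D (i+1)) x * (dp D (n-i)) y)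
          = n.choose (i+1) • ((dp D (i+1)) x * (dp D (n+1-(i+1))) y) := by
        intro i hi
        rw [mem_range] at hi
        have h : n - i = n + 1 - (i + 1) := by omega
        rw [h]
      rw [Finset.sum_congr rfl this]
      simp only [Nat.sub_zero, Nat.choose_zero_right, pow_zero]
      abel
    rw [h4]
    simp only [Nat.choose_zero_right, one_smul, Nat.choose_succ_self_right, Nat.sub_zero]
    ring

end Aux

section Tri
variable {β : Type*} [AddCommMonoid β]

lemma tri_sum (M : ℕ) (F : ℕ → ℕ → β) :
    ∑ m ∈ range M, ∑ n ∈ range (M - m), F m n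
      = ∑ N ∈ range M, ∑ m ∈ range (N + 1), F m (N - m) := by
  induction M with
  | zero => simp
  | succ M ih =>
    rw [Finset.sum_range_succ (fun N => ∑ m ∈ range (N+1), F m (N-m)) M, ← ih]
    rw [Finset.sum_range_succ (fun m => ∑ n ∈ range (M+1-m), F m n) M]
    have hMM : M + 1 - M = 1 := by omega
    rw [hMM, Finset.sum_range_one]
    have h1 : ∀ m ∈ range M, ∑ n ∈ range (M+1-m), F m n
        = ∑ n ∈ range (M-m), F m n + F m (M-m) := by
      intro m hm
      rw [mem_range] at hm
      have h : M + 1 - m = (M - m) + 1 := by omega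
      rw [h, Finset.sum_range_succ]
    rw [Finset.sum_congr rfl h1, Finset.sum_add_distrib]
    have h2 : ∑ m ∈ range (M+1), F m (M-m) = ∑ m ∈ range M, F m (M-m) + F M 0 := by
      rw [Finset.sum_range_succ, Nat.sub_self]
    rw [h2]
    abel

lemma tri_trunc (M : ℕ) (F : ℕ → ℕ → β) (hF : ∀ m n, M ≤ m + n → F m n = 0) :
    ∑ m ∈ range M, ∑ n ∈ range M, F m n
      = ∑ N ∈ range M, ∑ m ∈ range (N + 1), F m (N - m) := by
  rw [← tri_sum]
  refine Finset.sum_congr rfl fun m hm => ?_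
  rw [mem_range] at hm
  refine (Finset.sum_subset ?_ ?_).symm
  · intro n hn; rw [mem_range] at *; omega
  · intro n _ hn
    rw [mem_range, not_lt] at hn
    exact hF m n (by omega)

end Tri

section Exp
variable {k B : Type*} [Field k] [CharZero k] [CommRing B] [Algebra k B]

local notation "dp" D:max n:max => (Derivation.toLinearMap D ^ n : B →ₗ[k] B)

omit [CharZero k] in
lemma dp_zero_of_le {D : Derivation k B B} {x : B} {n m : ℕ} (hx : (dp D n) x = 0)
    (h : n ≤ m) : (dp D m) x = 0 := by
  rw [← Nat.sub_add_cancel h, pow_add, Module.End.mul_apply, hx, map_zero]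

/-- truncated exponential sum -/
noncomputable def expSum (D : Derivation k B B) (M : ℕ) (x : B) : B :=
  ∑ n ∈ range M, (n.factorial : k)⁻¹ • (dp D n) x

/-- the bound from local nilpotency -/
lemma isLND_bound {D : Derivation k B B} (hD : IsLND D) (x : B) :
    ∃ M : ℕ, ∀ n, M ≤ n → (dp D n) x = 0 := by
  obtain ⟨n, hn⟩ := hD x
  exact ⟨n, fun m hm => dp_zero_of_le hn hm⟩

lemma expSum_eq_of_bound {D : Derivation k B B} {x : B} {M M' : ℕ}
    (hM : ∀ n, M ≤ n → (dp D n) x = 0) (h : M ≤ M') :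
    expSum (k := k) D M' x = expSum D M x := by
  refine (Finset.sum_subset (fun n hn => ?_) (fun n _ hn => ?_)).symm
  · rw [mem_range] at *; omega
  · rw [mem_range, not_lt] at hn
    rw [hM n hn, smul_zero]

/-- the exponential of a locally nilpotent derivation, as a function -/
noncomputable def expFun (D : Derivation k B B) (hD : IsLND D) (x : B) : B :=
  expSum (k := k) D (Classical.choose (isLND_bound hD x)) x

lemma expFun_eq_expSum {D : Derivation k B B} (hD : IsLND D) {x : B} {M : ℕ}
    (hM : ∀ n, M ≤ n → (dp D n) x = 0) : expFun D hD x = expSum D M x := by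
  have hfind := Classical.choose_spec (isLND_bound hD x)
  unfold expFun
  rcases le_total (Classical.choose (isLND_bound hD x)) M with h | h
  · rw [← expSum_eq_of_bound hfind h]
  · rw [expSum_eq_of_bound hM h]

lemma expFun_add {D : Derivation k B B} (hD : IsLND D) (x y : B) :
    expFun D hD (x + y) = expFun D hD x + expFun D hD y := by
  obtain ⟨Mx, hMx⟩ := isLND_bound hD x
  obtain ⟨My, hMy⟩ := isLND_bound hD y
  set M := max Mx My with hM
  have hx : ∀ n, M ≤ n → (dp D n) x = 0 := fun n hn => hMx n (le_trans (le_max_left _ _) hn)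
  have hy : ∀ n, M ≤ n → (dp D n) y = 0 := fun n hn => hMy n (le_trans (le_max_right _ _) hn)
  have hxy : ∀ n, M ≤ n → (dp D n) (x + y) = 0 := by
    intro n hn; rw [map_add, hx n hn, hy n hn, add_zero]
  rw [expFun_eq_expSum hD hx, expFun_eq_expSum hD hy, expFun_eq_expSum hD hxy]
  unfold expSum
  rw [← Finset.sum_add_distrib]
  refine Finset.sum_congr rfl fun n _ => ?_
  rw [map_add, smul_add]

lemma expFun_smul {D : Derivation k B B} (hD : IsLND D) (c : k) (x : B) :
    expFun D hD (c • x) = c • expFun D hD x := by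
  obtain ⟨Mx, hMx⟩ := isLND_bound hD x
  have hcx : ∀ n, Mx ≤ n → (dp D n) (c • x) = 0 := by
    intro n hn; rw [map_smul, hMx n hn, smul_zero]
  rw [expFun_eq_expSum hD hcx, expFun_eq_expSum hD hMx]
  unfold expSum
  rw [Finset.smul_sum]
  refine Finset.sum_congr rfl fun n _ => ?_
  rw [map_smul, smul_comm]

lemma expFun_one {D : Derivation k B B} (hD : IsLND D) : expFun D hD 1 = 1 := by
  have h1 : ∀ n, 1 ≤ n → (dp D n) (1 : B) = 0 := by
    intro n hn
    have : (dp D 1) (1 : B) = 0 := by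
      simpa using D.map_one_eq_zero
    exact dp_zero_of_le this hn
  rw [expFun_eq_expSum hD h1]
  unfold expSum
  simp

/-- the key coefficient identity -/
lemma coeff_id {N i : ℕ} (h : i ≤ N) :
    ((N.factorial : k))⁻¹ * (N.choose i : k)
      = ((i.factorial : k))⁻¹ * (((N - i).factorial : k))⁻¹ := by
  have key := Nat.choose_mul_factorial_mul_factorial h
  have hcast : (N.choose i : k) * (i.factorial : k) * ((N - i).factorial : k)
      = (N.factorial : k) := by
    exact_mod_cast congrArg (Nat.cast : ℕ → k) key
  have h1 : (N.factorial : k) ≠ 0 := Nat.cast_ne_zero.2 (Nat.factorial_ne_zero N)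
  have h2 : (i.factorial : k) ≠ 0 := Nat.cast_ne_zero.2 (Nat.factorial_ne_zero i)
  have h3 : (((N - i).factorial : k)) ≠ 0 := Nat.cast_ne_zero.2 (Nat.factorial_ne_zero _)
  field_simp
  linear_combination hcast

lemma expFun_mul {D : Derivation k B B} (hD : IsLND D) (x y : B) :
    expFun D hD (x * y) = expFun D hD x * expFun D hD y := by
  obtain ⟨Mx, hMx⟩ := isLND_bound hD x
  obtain ⟨My, hMy⟩ := isLND_bound hD y
  set M := Mx + My with hM
  have hx : ∀ n, M ≤ n → (dp D n) x = 0 := fun n hn => hMx n (by omega)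
  have hy : ∀ n, M ≤ n → (dp D n) y = 0 := fun n hn => hMy n (by omega)
  have hxy : ∀ n, M ≤ n → (dp D n) (x * y) = 0 := by
    intro n hn
    rw [iter_leibniz]
    refine Finset.sum_eq_zero fun i hi => ?_
    rcases le_or_gt Mx i with h | h
    · rw [hMx i h, zero_mul, smul_zero]
    · rw [hMy (n - i) (by omega), mul_zero, smul_zero]
  rw [expFun_eq_expSum hD hx, expFun_eq_expSum hD hy, expFun_eq_expSum hD hxy]
  unfold expSum
  rw [Finset.sum_mul_sum]
  have key : ∀ N ∈ range M, (N.factorial : k)⁻¹ • (dp D N) (x * y)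
      = ∑ i ∈ range (N + 1),
          (((i.factorial : k))⁻¹ * (((N - i).factorial : k))⁻¹) •
            ((dp D i) x * (dp D (N - i)) y) := by
    intro N _
    rw [iter_leibniz, Finset.smul_sum]
    refine Finset.sum_congr rfl fun i hi => ?_
    rw [mem_range] at hi
    rw [← Nat.cast_smul_eq_nsmul k, smul_smul, coeff_id (by omega)]
  rw [Finset.sum_congr rfl key]
  rw [← tri_trunc M (fun m n =>
    (((m.factorial : k))⁻¹ * ((n.factorial : k))⁻¹) • ((dp D m) x * (dp D n) y))
    (by
      intro m n hmn
      rcases le_or_gt Mx m with h | h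
      · rw [hMx m h, zero_mul, smul_zero]
      · rw [hMy n (by omega), mul_zero, smul_zero])]
  refine Finset.sum_congr rfl fun m _ => Finset.sum_congr rfl fun n _ => ?_
  rw [smul_mul_smul_comm]

end Exp

section Exp2
variable {k B : Type*} [Field k] [CharZero k] [CommRing B] [Algebra k B]

local notation "dp" D:max n:max => (Derivation.toLinearMap D ^ n : B →ₗ[k] B)

omit [CharZero k] in
lemma dp_neg (D : Derivation k B B) (n : ℕ) (x : B) :
    (dp (-D) n) x = ((-1 : ℤ) ^ n) • (dp D n) x := by
  induction n with
  | zero => simp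
  | succ n ih =>
    rw [dp_succ', dp_succ', ih]
    have : (-D : Derivation k B B) (((-1:ℤ)^n) • (dp D n) x)
        = ((-1:ℤ)^n) • ((-D : Derivation k B B) ((dp D n) x)) := by
      exact map_zsmul (-D : Derivation k B B).toLinearMap.toAddMonoidHom _ _
    rw [this]
    rw [Derivation.neg_apply]
    rw [pow_succ]
    rw [smul_neg, mul_comm, ← smul_smul]
    congr 1
    simp

omit [CharZero k] in
lemma isLND_neg {D : Derivation k B B} (hD : IsLND D) : IsLND (-D) := by
  intro b
  obtain ⟨n, hn⟩ := hD b
  exact ⟨n, by rw [dp_neg, hn, smul_zero]⟩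

/-- alternating binomial coefficient sum in `k` -/
lemma alt_sum_k (N : ℕ) :
    ∑ m ∈ range (N + 1), ((-1 : k) ^ m * ((m.factorial : k))⁻¹ * (((N - m).factorial : k))⁻¹)
      = if N = 0 then 1 else 0 := by
  have key : ∀ m ∈ range (N + 1),
      ((-1 : k) ^ m * ((m.factorial : k))⁻¹ * (((N - m).factorial : k))⁻¹)
      = ((N.factorial : k))⁻¹ * ((-1 : k) ^ m * (N.choose m : k)) := by
    intro m hm
    rw [mem_range] at hm
    linear_combination (-(-1:k)^m) * (coeff_id (k := k) (show m ≤ N by omega))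
  rw [Finset.sum_congr rfl key, ← Finset.mul_sum]
  have := Int.alternating_sum_range_choose (n := N)
  have hcast : ∑ m ∈ range (N + 1), ((-1 : k) ^ m * (N.choose m : k))
      = ((if N = 0 then 1 else 0 : ℤ) : k) := by
    rw [← this]
    push_cast
    exact Finset.sum_congr rfl fun i _ => by ring
  rw [hcast]
  rcases Nat.eq_zero_or_pos N with h | h
  · subst h; simp
  · rw [if_neg (by omega), if_neg (by omega)]
    simp

lemma expFun_leftInv {D : Derivation k B B} (hD : IsLND D) (hD' : IsLND (-D)) (x : B) :
    expFun D hD (expFun (-D) hD' x) = x := by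
  obtain ⟨M, hM⟩ := isLND_bound hD x
  have hMneg : ∀ n, M ≤ n → (dp (-D) n) x = 0 := by
    intro n hn; rw [dp_neg, hM n hn, smul_zero]
  rw [expFun_eq_expSum hD' hMneg]
  unfold expSum
  have step1 : expFun D hD (∑ m ∈ range M, (m.factorial : k)⁻¹ • (dp (-D) m) x)
      = ∑ m ∈ range M, (m.factorial : k)⁻¹ • expFun D hD ((dp (-D) m) x) := by
    induction' (range M) using Finset.induction_on with a s ha ih
    · simp only [Finset.sum_empty]
      have : (0 : B) = (0 : k) • (0 : B) := by simp
      calc expFun D hD 0 = expFun D hD ((0:k) • (0:B)) := by rw [smul_zero]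
        _ = (0:k) • expFun D hD 0 := expFun_smul hD 0 0
        _ = 0 := by rw [zero_smul]
    · rw [Finset.sum_insert ha, Finset.sum_insert ha, expFun_add hD, ih]
      have := expFun_smul hD ((a.factorial : k))⁻¹ ((dp (-D) a) x)
      rw [this]
  rw [step1]
  have step2 : ∀ m ∈ range M, (m.factorial : k)⁻¹ • expFun D hD ((dp (-D) m) x)
      = ∑ n ∈ range M, ((-1:k)^m * (m.factorial : k)⁻¹ * (n.factorial : k)⁻¹) • (dp D (m+n)) x := by
    intro m hm
    have hbnd : ∀ j, M ≤ j → (dp D j) ((dp (-D) m) x) = 0 := by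
      intro j hj
      rw [dp_neg, ← Int.cast_smul_eq_zsmul k, map_smul, ← Module.End.mul_apply, ← pow_add]
      rw [hM (j + m) (by omega), smul_zero]
    rw [expFun_eq_expSum hD hbnd]
    unfold expSum
    rw [Finset.smul_sum]
    refine Finset.sum_congr rfl fun n _ => ?_
    rw [dp_neg, ← Int.cast_smul_eq_zsmul k, map_smul, ← Module.End.mul_apply, ← pow_add]
    rw [smul_smul, smul_smul]
    rw [show m + n = n + m from by omega]
    congr 1
    push_cast
    ring
  rw [Finset.sum_congr rfl step2]
  rw [tri_trunc M (fun m n => ((-1:k)^m * (m.factorial : k)⁻¹ * (n.factorial : k)⁻¹) • (dp D (m+n)) x)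
    (by
      intro m n hmn
      rw [hM (m+n) hmn, smul_zero])]
  have step3 : ∀ N ∈ range M, ∑ m ∈ range (N+1),
      ((-1:k)^m * (m.factorial : k)⁻¹ * ((N-m).factorial : k)⁻¹) • (dp D (m+(N-m))) x
      = (if N = 0 then (1:k) else 0) • (dp D N) x := by
    intro N _
    rw [← alt_sum_k N, Finset.sum_smul]
    refine Finset.sum_congr rfl fun m hm => ?_
    rw [mem_range] at hm
    have : m + (N - m) = N := by omega
    rw [this]
  rw [Finset.sum_congr rfl step3]
  rcases Nat.eq_zero_or_pos M with h | h
  · have hx0 := hM 0 (by omega)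
    simp only [pow_zero, Module.End.one_apply] at hx0
    subst h
    simp [hx0]
  · rw [Finset.sum_eq_single 0]
    · simp
    · intro b _ hb
      rw [if_neg hb, zero_smul]
    · intro hb
      exfalso
      exact hb (mem_range.2 (by omega))

end Exp2

section Conj
variable {k B : Type*} [Field k] [CharZero k] [CommRing B] [Algebra k B]

local notation "dp" D:max n:max => (Derivation.toLinearMap D ^ n : B →ₗ[k] B)

lemma expFun_congr {D₁ D₂ : Derivation k B B} (h : D₁ = D₂) (h₁ : IsLND D₁) (h₂ : IsLND D₂)
    (x : B) : expFun D₁ h₁ x = expFun D₂ h₂ x := by subst h; rfl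

lemma expFun_rightInv {D : Derivation k B B} (hD : IsLND D) (hD' : IsLND (-D)) (x : B) :
    expFun (-D) hD' (expFun D hD x) = x := by
  have h'' : IsLND (-(-D)) := by rw [neg_neg]; exact hD
  have h := expFun_leftInv (D := -D) hD' h'' x
  rwa [expFun_congr (neg_neg D) h'' hD] at h

lemma expFun_zero {D : Derivation k B B} (hD : IsLND D) : expFun D hD 0 = 0 := by
  have := expFun_smul hD 0 0
  simpa using this

/-- conjugation of a derivation by the exponential of a locally nilpotent derivation -/
noncomputable def conjDer (D : Derivation k B B) (hD : IsLND D) (hD' : IsLND (-D))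
    (T : Derivation k B B) : Derivation k B B where
  toFun := fun x => expFun D hD (T (expFun (-D) hD' x))
  map_add' := by
    intro a b
    rw [expFun_add hD', map_add, expFun_add hD]
  map_smul' := by
    intro c a
    show expFun D hD (T (expFun (-D) hD' (c • a))) = c • expFun D hD (T (expFun (-D) hD' a))
    rw [expFun_smul hD', Derivation.map_smul, expFun_smul hD]
  map_one_eq_zero' := by
    simp only [LinearMap.coe_mk, AddHom.coe_mk]
    rw [expFun_one hD', Derivation.map_one_eq_zero, expFun_zero hD]
  leibniz' := by
    intro a b
    simp only [LinearMap.coe_mk, AddHom.coe_mk, smul_eq_mul]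
    rw [expFun_mul hD', Derivation.leibniz]
    simp only [smul_eq_mul]
    rw [expFun_add hD, expFun_mul hD, expFun_mul hD]
    rw [expFun_leftInv hD hD', expFun_leftInv hD hD']

lemma conjDer_apply {D : Derivation k B B} (hD : IsLND D) (hD' : IsLND (-D))
    (T : Derivation k B B) (x : B) :
    conjDer D hD hD' T x = expFun D hD (T (expFun (-D) hD' x)) := rfl

lemma conjDer_pow {D : Derivation k B B} (hD : IsLND D) (hD' : IsLND (-D))
    (T : Derivation k B B) (n : ℕ) (x : B) :
    (dp (conjDer D hD hD' T) n) x = expFun D hD ((dp T n) (expFun (-D) hD' x)) := by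
  induction n generalizing x with
  | zero =>
    simp only [pow_zero, Module.End.one_apply]
    rw [expFun_leftInv hD hD']
  | succ n ih =>
    rw [dp_succ', ih, conjDer_apply]
    rw [expFun_rightInv hD hD']
    rw [← dp_succ']

lemma isLND_conjDer {D : Derivation k B B} (hD : IsLND D) (hD' : IsLND (-D))
    {T : Derivation k B B} (hT : IsLND T) : IsLND (conjDer D hD hD' T) := by
  intro b
  obtain ⟨n, hn⟩ := hT (expFun (-D) hD' b)
  exact ⟨n, by rw [conjDer_pow, hn, expFun_zero]⟩

lemma hasSlice_conjDer {D : Derivation k B B} (hD : IsLND D) (hD' : IsLND (-D))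
    {T : Derivation k B B} (hT : HasSlice T) : HasSlice (conjDer D hD hD' T) := by
  obtain ⟨s, hs⟩ := hT
  refine ⟨expFun D hD s, ?_⟩
  rw [conjDer_apply, expFun_rightInv hD hD', hs, expFun_one]

omit [CharZero k] in
lemma dp_smulDer {D : Derivation k B B} {f : B} (hf : D f = 0) (n : ℕ) (x : B) :
    (dp (f • D) n) x = f ^ n * (dp D n) x := by
  induction n generalizing x with
  | zero => simp
  | succ n ih =>
    rw [dp_succ', ih, Derivation.smul_apply, smul_eq_mul, Derivation.leibniz]
    have hfn : D (f ^ n) = 0 := by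
      rw [Derivation.leibniz_pow, hf]; simp
    rw [hfn, dp_succ']
    simp only [smul_eq_mul, smul_zero, mul_zero, add_zero]
    ring

omit [CharZero k] in
lemma isLND_smulDer {D : Derivation k B B} {f : B} (hf : D f = 0) (hD : IsLND D) :
    IsLND (f • D) := by
  intro b
  obtain ⟨n, hn⟩ := hD b
  exact ⟨n, by rw [dp_smulDer hf, hn, mul_zero]⟩

end Conj

section Main
variable {k B : Type*} [Field k] [CharZero k] [CommRing B] [IsDomain B] [Algebra k B]

local notation "dp" D:max n:max => (Derivation.toLinearMap D ^ n : B →ₗ[k] B)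

lemma vandermonde {M : ℕ} (v : ℕ → B)
    (h : ∀ c : k, ∑ n ∈ range M, (algebraMap k B c) ^ n * v n = 0) :
    ∀ n, n < M → v n = 0 := by
  set p : Polynomial B := ∑ n ∈ range M, Polynomial.monomial n (v n) with hp
  have heval : ∀ c : k, p.eval (algebraMap k B c) = 0 := by
    intro c
    rw [hp, Polynomial.eval_finset_sum]
    rw [← h c]
    refine Finset.sum_congr rfl fun n _ => ?_
    rw [Polynomial.eval_monomial]
    ring
  have hinf : Set.Infinite {x : B | p.IsRoot x} := by
    have : Set.range (algebraMap k B) ⊆ {x : B | p.IsRoot x} := by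
      rintro _ ⟨c, rfl⟩
      exact heval c
    exact Set.Infinite.mono this (Set.infinite_range_of_injective (algebraMap k B).injective)
  have hp0 : p = 0 := Polynomial.eq_zero_of_infinite_isRoot p hinf
  intro n hn
  have := congrArg (fun q => Polynomial.coeff q n) hp0
  simp only [Polynomial.coeff_zero] at this
  rw [hp, Polynomial.finset_sum_coeff] at this
  rw [← this]
  rw [Finset.sum_eq_single n]
  · rw [Polynomial.coeff_monomial, if_pos rfl]
  · intro j _ hj
    rw [Polynomial.coeff_monomial, if_neg hj]
  · intro hn'
    exact absurd (mem_range.2 hn) hn'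

/-- existence of the `D`-degree of a nonzero element -/
lemma exists_deg {T : Derivation k B B} (hT : IsLND T) {x : B} (hx : x ≠ 0) :
    ∃ N, (dp T N) x ≠ 0 ∧ ∀ m, N < m → (dp T m) x = 0 := by
  classical
  have hex := hT x
  set ν := Nat.find hex with hν
  have hspec : (dp T ν) x = 0 := Nat.find_spec hex
  have hνpos : 0 < ν := by
    rcases Nat.eq_zero_or_pos ν with h0 | h0
    · exfalso; apply hx
      have := hspec
      rw [h0] at this
      simpa using this
    · exact h0
  refine ⟨ν - 1, ?_, ?_⟩
  · exact Nat.find_min hex (by omega)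
  · intro m hm
    exact dp_zero_of_le hspec (by omega)

/-- kernels of locally nilpotent derivations are factorially closed -/
lemma fact_closed {T : Derivation k B B} (hT : IsLND T) {x y : B} (hx : x ≠ 0) (hy : y ≠ 0)
    (hxy : T (x * y) = 0) : T x = 0 := by
  have hCZ : CharZero B := charZero_of_injective_algebraMap (algebraMap k B).injective
  obtain ⟨Nx, hNx1, hNx2⟩ := exists_deg hT hx
  obtain ⟨Ny, hNy1, hNy2⟩ := exists_deg hT hy
  rcases Nat.eq_zero_or_pos (Nx + Ny) with h0 | h0
  · have : Nx = 0 := by omega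
    have h1 : (dp T 1) x = 0 := hNx2 1 (by omega)
    rw [pow_one] at h1
    exact h1
  · exfalso
    have hzero : (dp T (Nx + Ny)) (x * y) = 0 := by
      have h1 : (dp T 1) (x * y) = 0 := by rw [pow_one]; exact hxy
      exact dp_zero_of_le h1 (by omega)
    rw [iter_leibniz] at hzero
    rw [Finset.sum_eq_single Nx] at hzero
    · have hsub : Nx + Ny - Nx = Ny := by omega
      rw [hsub] at hzero
      have hne : (dp T Nx) x * (dp T Ny) y ≠ 0 := mul_ne_zero hNx1 hNy1
      have hcne : ((Nx + Ny).choose Nx : B) ≠ 0 :=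
        Nat.cast_ne_zero.2 (Nat.choose_pos (by omega)).ne'
      rw [nsmul_eq_mul] at hzero
      exact mul_ne_zero hcne hne hzero
    · intro i hi hine
      rw [mem_range] at hi
      rcases lt_or_gt_of_ne hine with hlt | hgt
      · rw [hNy2 (Nx + Ny - i) (by omega), mul_zero, smul_zero]
      · rw [hNx2 i hgt, zero_mul, smul_zero]
    · intro hn'
      exact absurd (mem_range.2 (by omega)) hn'

omit [IsDomain B] in
lemma dp_const_mul {D : Derivation k B B} {a : B} (ha : D a = 0) (n : ℕ) (x : B) :
    (dp D n) (a * x) = a * (dp D n) x := by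
  induction n generalizing x with
  | zero => simp
  | succ n ih =>
    rw [dp_succ', ih, dp_succ', Derivation.leibniz, ha]
    simp only [smul_eq_mul, smul_zero, mul_zero, add_zero]

omit [IsDomain B] in
lemma dp_pow_slice {D : Derivation k B B} {r c : B} (hr : D r = c) (hc : D c = 0)
    (n : ℕ) : ∀ j, j ≤ n → (dp D j) (r ^ n) = n.descFactorial j • (c ^ j * r ^ (n - j)) := by
  intro j
  induction j with
  | zero => intro _; simp
  | succ j ih =>
    intro hj
    have hcj : D (c ^ j) = 0 := by
      rw [Derivation.leibniz_pow, hc]; simp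
    rw [dp_succ', ih (by omega), map_nsmul, Derivation.leibniz, hcj, smul_zero, add_zero,
      Derivation.leibniz_pow, hr, Nat.descFactorial_succ]
    simp only [nsmul_eq_mul, smul_eq_mul]
    push_cast
    rw [show n - j - 1 = n - (j + 1) from by omega]
    ring

end Main

section Main2
variable {k B : Type*} [Field k] [CharZero k] [CommRing B] [IsDomain B] [Algebra k B]

local notation "dp" D:max n:max => (Derivation.toLinearMap D ^ n : B →ₗ[k] B)

omit [IsDomain B] in
/-- Taylor expansion : everything is, up to a power of `c`, a polynomial in the
local slice `r` with coefficients in the kernel. -/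
lemma taylor_mem {D : Derivation k B B} {r c : B} (hr : D r = c) (hc : D c = 0) :
    ∀ n (x : B), (dp D n) x = 0 →
      ∃ m : ℕ, c ^ m * x ∈ Algebra.adjoin k ({y : B | D y = 0} ∪ {r}) := by
  intro n
  induction n with
  | zero =>
    intro x hx
    simp only [pow_zero, Module.End.one_apply] at hx
    exact ⟨0, by rw [hx, mul_zero]; exact Subalgebra.zero_mem _⟩
  | succ n ih =>
    intro x hx
    set S := Algebra.adjoin k ({y : B | D y = 0} ∪ {r}) with hS
    set y := c ^ n * x - (n.factorial : k)⁻¹ • ((dp D n) x * r ^ n) with hy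
    have hdpnx : D ((dp D n) x) = 0 := by
      rw [← dp_succ']; exact hx
    have hyn : (dp D n) y = 0 := by
      rw [hy, map_sub, map_smul]
      have h1 : (dp D n) (c ^ n * x) = c ^ n * (dp D n) x := by
        have hcn : D (c ^ n) = 0 := by rw [Derivation.leibniz_pow, hc]; simp
        exact dp_const_mul hcn n x
      have h2 : (dp D n) ((dp D n) x * r ^ n) = (dp D n) x * (n.factorial • c ^ n) := by
        rw [dp_const_mul hdpnx, dp_pow_slice hr hc n n le_rfl, Nat.descFactorial_self,
          Nat.sub_self, pow_zero, mul_one]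
      rw [h1, h2]
      have h3 : (n.factorial : k)⁻¹ • ((dp D n) x * n.factorial • c ^ n)
          = (dp D n) x * c ^ n := by
        rw [← Nat.cast_smul_eq_nsmul k (n.factorial), mul_smul_comm, smul_smul,
          inv_mul_cancel₀ (Nat.cast_ne_zero.2 (Nat.factorial_ne_zero n)), one_smul]
      rw [h3, mul_comm]
      ring
    obtain ⟨m, hm⟩ := ih y hyn
    refine ⟨m + n, ?_⟩
    have hsplit : c ^ (m + n) * x
        = c ^ m * y + (n.factorial : k)⁻¹ • (c ^ m * (dp D n) x * r ^ n) := by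
      rw [hy, mul_sub, mul_smul_comm]
      rw [show c ^ m * ((dp D n) x * r ^ n) = c ^ m * (dp D n) x * r ^ n from by ring]
      rw [show c ^ m * (c ^ n * x) = c ^ (m + n) * x from by ring]
      abel
    rw [hsplit]
    refine Subalgebra.add_mem _ hm (Subalgebra.smul_mem _ ?_ _)
    have hcS : c ∈ S := Algebra.subset_adjoin (Or.inl hc)
    have hxS : (dp D n) x ∈ S := Algebra.subset_adjoin (Or.inl hdpnx)
    have hrS : r ∈ S := Algebra.subset_adjoin (Or.inr rfl)
    exact Subalgebra.mul_mem _ (Subalgebra.mul_mem _ (Subalgebra.pow_mem _ hcS m) hxS)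
      (Subalgebra.pow_mem _ hrS n)

/-- If the kernel of a locally nilpotent derivation `D` is contained in the kernel of a
derivation `T`, then `T` is `D` up to a "fraction". -/
lemma ker_le_ker {D T : Derivation k B B} (hD : IsLND D)
    {x₀ : B} (hx₀ : D x₀ ≠ 0)
    (hker : ∀ x : B, D x = 0 → T x = 0) :
    ∃ u v : B, v ≠ 0 ∧ D v = 0 ∧ ∀ x : B, v * T x = u * D x := by
  have hx₀ne : x₀ ≠ 0 := by rintro rfl; simp at hx₀
  obtain ⟨N, hN1, hN2⟩ := exists_deg hD hx₀ne
  have hNpos : 1 ≤ N := by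
    by_contra hN
    push_neg at hN
    interval_cases N
    exact hx₀ (by simpa using hN2 1 (by omega))
  set r := (dp D (N - 1)) x₀ with hrdef
  set c := (dp D N) x₀ with hcdef
  have hrc : D r = c := by
    rw [hrdef, hcdef, ← dp_succ', show N - 1 + 1 = N from by omega]
  have hcc : D c = 0 := by
    rw [hcdef, ← dp_succ']
    exact hN2 (N + 1) (by omega)
  have hcne : c ≠ 0 := hN1
  set E : Derivation k B B := c • T - T r • D with hE
  have hEapp : ∀ x, E x = c * T x - T r * D x := by
    intro x
    rw [hE, Derivation.sub_apply, Derivation.smul_apply, Derivation.smul_apply,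
      smul_eq_mul, smul_eq_mul]
  have hEzero : ∀ x : B, E x = 0 := by
    have hsub : ({y : B | D y = 0} ∪ {r}) ⊆ (lndKer E : Set B) := by
      rintro z (hz | hz)
      · show E z = 0
        rw [hEapp, hker z hz, hz, mul_zero, mul_zero, sub_zero]
      · show E z = 0
        rw [Set.mem_singleton_iff] at hz
        subst hz
        rw [hEapp, hrc]
        ring
    have hadj : Algebra.adjoin k ({y : B | D y = 0} ∪ {r}) ≤ lndKer E :=
      Algebra.adjoin_le hsub
    intro x
    obtain ⟨n, hn⟩ := hD x
    obtain ⟨m, hm⟩ := taylor_mem hrc hcc n x hn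
    have hmem : E (c ^ m * x) = 0 := hadj hm
    have hEc : E c = 0 := by rw [hEapp, hker c hcc, hcc]; ring
    have hEcm : E (c ^ m) = 0 := by rw [Derivation.leibniz_pow, hEc]; simp
    rw [Derivation.leibniz, hEcm, smul_zero, add_zero, smul_eq_mul] at hmem
    exact (mul_eq_zero.mp hmem).resolve_left (pow_ne_zero m hcne)
  refine ⟨T r, c, hcne, hcc, fun x => ?_⟩
  have h0 := hEzero x
  rw [hEapp] at h0
  linear_combination h0

end Main2

section MainThm
variable {k B : Type*} [Field k] [CharZero k] [CommRing B] [IsDomain B] [Algebra k B]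

local notation "dp" D:max n:max => (Derivation.toLinearMap D ^ n : B →ₗ[k] B)

theorem stmt_13' [Algebra.FiniteType k B] (hdim : ringKrullDim B = 2)
    (h : MLstar k (B := B) ≠ ⊤) :
    ML k (B := B) = MLstar k (B := B) := by
  -- there exists a locally nilpotent derivation with a slice
  have hex : ∃ T : Derivation k B B, IsLND T ∧ HasSlice T := by
    by_contra hno
    push_neg at hno
    apply h
    rw [MLstar, eq_top_iff]
    refine le_iInf₂ fun T hT => absurd hT.2 (hno T hT.1)
  obtain ⟨T₀, hT₀lnd, hT₀s⟩ := hex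
  apply le_antisymm
  · -- ML ≤ MLstar
    intro x hx
    rw [MLstar]
    refine Algebra.mem_iInf.mpr fun T => Algebra.mem_iInf.mpr fun hT => ?_
    exact (Algebra.mem_iInf.mp ((Algebra.mem_iInf.mp hx) T)) hT.1
  · -- MLstar ≤ ML
    intro b hb
    have hbmem : ∀ T : Derivation k B B, IsLND T → HasSlice T → T b = 0 := by
      intro T hT hTs
      exact (Algebra.mem_iInf.mp ((Algebra.mem_iInf.mp hb) T)) ⟨hT, hTs⟩
    rw [ML]
    refine Algebra.mem_iInf.mpr fun D => Algebra.mem_iInf.mpr fun hD => ?_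
    show D b = 0
    by_contra hDb
    -- Step 1 : for every slice LND `T`, every `f ∈ ker D` and every `n`,
    -- `T (f ^ n * D ^ n b) = 0`.
    have key : ∀ T : Derivation k B B, IsLND T → HasSlice T →
        ∀ f : B, D f = 0 → ∀ n : ℕ, T (f ^ n * (dp D n) b) = 0 := by
      intro T hT hTs f hf n
      obtain ⟨M, hM⟩ := isLND_bound hD b
      rcases lt_or_ge n M with hn | hn
      swap
      · rw [hM n hn, mul_zero, map_zero]
      have hall : ∀ c' : k, ∑ j ∈ range M, (algebraMap k B c') ^ j *
          ((j.factorial : k)⁻¹ • T (f ^ j * (dp D j) b)) = 0 := by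
        intro c'
        set E : Derivation k B B := ((-c') • f) • D with hEdef
        have hgf : D ((-c') • f) = 0 := by rw [Derivation.map_smul, hf, smul_zero]
        have hE : IsLND E := isLND_smulDer hgf hD
        have hE' : IsLND (-E) := isLND_neg hE
        have hnegE : -E = (c' • f) • D := by
          rw [hEdef, ← neg_smul (-c' • f) D, ← neg_smul (-c') f, neg_neg c']
        have hgf' : D (c' • f) = 0 := by rw [Derivation.map_smul, hf, smul_zero]
        -- the conjugated derivation kills b
        have hconj : conjDer E hE hE' T b = 0 :=
          hbmem _ (isLND_conjDer hE hE' hT) (hasSlice_conjDer hE hE' hTs)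
        rw [conjDer_apply] at hconj
        have hTkill : T (expFun (-E) hE' b) = 0 := by
          have h1 := congrArg (expFun (-E) hE') hconj
          rwa [expFun_rightInv hE hE', expFun_zero] at h1
        -- compute the exponential explicitly
        have hdpnegE : ∀ j : ℕ, (dp (-E) j) b = c' ^ j • (f ^ j * (dp D j) b) := by
          intro j
          have h1 : ((-E : Derivation k B B).toLinearMap ^ j) b
              = (((c' • f) • D : Derivation k B B).toLinearMap ^ j) b := by
            rw [hnegE]
          rw [h1, dp_smulDer hgf', smul_pow, smul_mul_assoc]
        have hbnd : ∀ j, M ≤ j → (dp (-E) j) b = 0 := by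
          intro j hj
          rw [hdpnegE j, hM j hj, mul_zero, smul_zero]
        rw [expFun_eq_expSum hE' hbnd] at hTkill
        unfold expSum at hTkill
        rw [map_sum] at hTkill
        rw [← hTkill]
        refine Finset.sum_congr rfl fun j _ => ?_
        rw [hdpnegE j, Derivation.map_smul_of_tower, Derivation.map_smul]
        rw [smul_comm ((j.factorial : k))⁻¹ (c' ^ j)]
        rw [Algebra.smul_def (c' ^ j), map_pow]
    -- Step 2 : extract each coefficient (Vandermonde)
      have hvan := vandermonde (k := k)
        (fun j => (j.factorial : k)⁻¹ • T (f ^ j * (dp D j) b)) hall n hn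
      have h2 := congrArg (fun z => (n.factorial : k) • z) hvan
      simp only [smul_smul, mul_inv_cancel₀
        (Nat.cast_ne_zero.2 (Nat.factorial_ne_zero n) : (n.factorial : k) ≠ 0),
        one_smul, smul_zero] at h2
      exact h2
    -- Step 3 : ker D ⊆ ker T for every slice LND T
    have hker : ∀ x : B, D x = 0 → T₀ x = 0 := by
      intro x hx
      rcases eq_or_ne x 0 with rfl | hxne
      · exact map_zero T₀
      · have h1 := key T₀ hT₀lnd hT₀s x hx 1
        rw [pow_one, pow_one] at h1
        exact fact_closed hT₀lnd hxne hDb h1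
    -- Step 4 : then T₀ = (u/v) D, contradiction
    obtain ⟨u, v, hvne, hDv, huv⟩ := ker_le_ker hD hDb hker
    have hT₀b : T₀ b = 0 := hbmem T₀ hT₀lnd hT₀s
    have hub : u * D b = 0 := by rw [← huv b, hT₀b, mul_zero]
    rcases mul_eq_zero.mp hub with hu | hDb'
    · obtain ⟨s, hs⟩ := hT₀s
      have := huv s
      rw [hs, hu, mul_one, zero_mul] at this
      exact hvne this
    · exact hDb hDb'

end MainThm

/-- For a two-dimensional affine domain `B`, if `ML*(B) ≠ B` then `ML(B) = ML*(B)`. -/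
theorem stmt_13 {k B : Type*} [Field k] [CharZero k] [CommRing B] [IsDomain B] [Algebra k B]
    [Algebra.FiniteType k B] (hdim : ringKrullDim B = 2)
    (h : MLstar k (B := B) ≠ ⊤) :
    ML k (B := B) = MLstar k (B := B) := by
  exact stmt_13' hdim h
end
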